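/- Let E be a real vector space of finite dimension d > 0, let q' be a nonzero positive semidefinite quadratic form on E with polar form B', let u be a q'-selfadjoint endomorphism of E, and let λ ≥ 0 be a real number such that q'(u(x)) = λ·q'(x) for all x ∈ E. Then B'(u²(x), y) = λ·B'(x, y) for all x, y ∈ E, the image of u² − λ·id is contained in the radical of B' (a proper subspace of E), and at least one of √λ and −√λ is an eigenvalue of u. -/
import Mathlib


/-- Let `q'` be a nonzero positive semidefinite quadratic form with polar form `B'` on a
nonzero finite-dimensional real vector space, `u` a `q'`-selfadjoint endomorphism, and
`l ≥ 0` with `q'(u x) = l • q' x` for all `x`. Then `B'(u² x, y) = l • B'(x, y)` for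
all `x, y`, the range of `u² - l • id` is contained in the radical of `B'` (which is a
proper subspace of `E`), and `√l` or `-√l` is an eigenvalue of `u`. -/
theorem eigenvalue_from_invariant_form {E : Type*} [AddCommGroup E] [Module ℝ E]
    [FiniteDimensional ℝ E] (hd : 0 < Module.finrank ℝ E)
    (q' : QuadraticForm ℝ E) (hq'ne : q' ≠ 0) (hq'pos : ∀ x : E, 0 ≤ q' x)
    (B' : LinearMap.BilinForm ℝ E) (hBsymm : ∀ x y : E, B' x y = B' y x)
    (hBq : ∀ x : E, B' x x = q' x)
    (u : Module.End ℝ E) (hu : ∀ x y : E, B' (u x) y = B' x (u y))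
    (l : ℝ) (hl : 0 ≤ l) (hql : ∀ x : E, q' (u x) = l * q' x) :
    (∀ x y : E, B' (u (u x)) y = l * B' x y) ∧
      LinearMap.range (u * u - l • (1 : Module.End ℝ E)) ≤ LinearMap.ker B' ∧
      LinearMap.ker B' ≠ ⊤ ∧
      (Module.End.HasEigenvalue u (Real.sqrt l) ∨
        Module.End.HasEigenvalue u (-Real.sqrt l)) := by
  -- polarization: B'(u x, u y) = l * B'(x,y)
  have key : ∀ x y : E, B' (u x) (u y) = l * B' x y := by
    intro x y
    have h1 : B' (x + y) (x + y) = q' x + q' y + (B' x y + B' y x) := by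
      simp only [map_add, LinearMap.add_apply, hBq]; ring
    have h2 : B' (u x + u y) (u x + u y)
        = l * q' x + l * q' y + (B' (u x) (u y) + B' (u y) (u x)) := by
      simp only [map_add, LinearMap.add_apply, hBq, hql]; ring
    have h3 : q' (u (x + y)) = l * q' (x + y) := hql (x + y)
    rw [map_add, ← hBq (u x + u y), h2, ← hBq (x + y), h1] at h3
    have hs1 := hBsymm x y
    have hs2 := hBsymm (u x) (u y)
    linear_combination h3 / 2 + hs2 / 2 - (l / 2) * hs1
  have part1 : ∀ x y : E, B' (u (u x)) y = l * B' x y := by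
    intro x y
    rw [hu (u x) y, key]
  have part2 : LinearMap.range (u * u - l • (1 : Module.End ℝ E)) ≤ LinearMap.ker B' := by
    rintro _ ⟨x, rfl⟩
    rw [LinearMap.mem_ker]
    ext y
    simp only [LinearMap.sub_apply, LinearMap.smul_apply, Module.End.one_apply,
      Module.End.mul_apply, map_sub, map_smul, LinearMap.zero_apply, smul_eq_mul]
    rw [part1]
    ring
  have part3 : LinearMap.ker B' ≠ ⊤ := by
    intro h
    apply hq'ne
    ext x
    have hx : x ∈ LinearMap.ker B' := h ▸ Submodule.mem_top
    rw [LinearMap.mem_ker] at hx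
    have : B' x x = 0 := by rw [hx]; rfl
    simpa [← hBq x] using this
  refine ⟨part1, part2, part3, ?_⟩
  set a := Real.sqrt l with ha_def
  have ha : a * a = l := Real.mul_self_sqrt hl
  have hfact : u * u - l • (1 : Module.End ℝ E)
      = (u - a • 1) * (u + a • 1) := by
    ext x
    simp only [Module.End.mul_apply, LinearMap.sub_apply, LinearMap.add_apply,
      LinearMap.smul_apply, Module.End.one_apply, map_add, map_smul, smul_smul, ← ha]
    module
  have hninj : ¬ Function.Injective (u * u - l • (1 : Module.End ℝ E)) := by
    intro hinj
    have hsurj := (LinearMap.injective_iff_surjective).mp hinj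
    apply part3
    rw [eq_top_iff]
    exact le_trans (by rw [LinearMap.range_eq_top.mpr hsurj]) part2
  rw [hfact] at hninj
  have hker : LinearMap.ker ((u - a • 1) * (u + a • 1)) ≠ ⊥ := by
    simp only [ne_eq, LinearMap.ker_eq_bot]
    exact hninj
  obtain ⟨x, hxmem, hxne⟩ := Submodule.exists_mem_ne_zero_of_ne_bot hker
  have hx : (u - a • 1) ((u + a • 1) x) = 0 := by
    rw [LinearMap.mem_ker, Module.End.mul_apply] at hxmem
    exact hxmem
  by_cases hy : (u + a • 1) x = 0
  · right
    apply Module.End.hasEigenvalue_of_hasEigenvector (x := x)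
    refine ⟨Module.End.mem_eigenspace_iff.mpr ?_, hxne⟩
    have : u x + a • x = 0 := by
      simpa [LinearMap.add_apply, LinearMap.smul_apply] using hy
    rw [neg_smul, eq_neg_iff_add_eq_zero]
    exact this
  · left
    apply Module.End.hasEigenvalue_of_hasEigenvector (x := (u + a • 1) x)
    refine ⟨Module.End.mem_eigenspace_iff.mpr ?_, hy⟩
    have : u ((u + a • 1) x) - a • ((u + a • 1) x) = 0 := by
      simpa [LinearMap.sub_apply, LinearMap.smul_apply] using hx
    exact sub_eq_zero.mp this
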